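/- Fix a unit vector θ ∈ ℝ³ and vectors s₁, t₁ ∈ ℝ³, and let w : ℝ → ℝ³ be differentiable at r with w'(r) = √(1+‖w(r)‖²)·t₁ + s₁ × w(r). Writing b = √(1+‖w(r)‖²), f = b + θ^T w(r), and β = r(t₁ − (θ^T t₁)θ) + r θ × s₁, the function ρ(r) = r·(√(1+‖w(r)‖²) + θ^T w(r)) is differentiable at r with ρ'(r) = f·(1 + r θ^T t₁) + w(r)^T β. -/

import Mathlib

open Matrix

/-- if `w'(r) = √(1+‖w(r)‖²) t₁ + s₁ × w(r)`, then
`ρ(r) = r(√(1+‖w(r)‖²) + θᵀw(r))` is differentiable at `r` with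
`ρ'(r) = f(1 + r θᵀt₁) + w(r)ᵀβ`, where `f = b + θᵀw(r)` and
`β = r(t₁ − (θᵀt₁)θ) + r θ×s₁`. -/
theorem rho_deriv (θ s₁ t₁ : Fin 3 → ℝ) (hθ : Real.sqrt (θ ⬝ᵥ θ) = 1)
    (w : ℝ → Fin 3 → ℝ) (r : ℝ)
    (hw : HasDerivAt w (Real.sqrt (1 + w r ⬝ᵥ w r) • t₁ + crossProduct s₁ (w r)) r) :
    HasDerivAt (fun s => s * (Real.sqrt (1 + w s ⬝ᵥ w s) + θ ⬝ᵥ w s))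
      ((Real.sqrt (1 + w r ⬝ᵥ w r) + θ ⬝ᵥ w r) * (1 + r * (θ ⬝ᵥ t₁))
        + w r ⬝ᵥ (r • (t₁ - (θ ⬝ᵥ t₁) • θ) + r • crossProduct θ s₁)) r := by
  set v : Fin 3 → ℝ := Real.sqrt (1 + w r ⬝ᵥ w r) • t₁ + crossProduct s₁ (w r) with hv
  have hwi : ∀ i, HasDerivAt (fun s => w s i) (v i) r := fun i =>
    (hasDerivAt_pi.mp hw) i
  have hpos : (0:ℝ) < 1 + w r ⬝ᵥ w r := by
    have : (0:ℝ) ≤ w r ⬝ᵥ w r := by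
      simp only [dotProduct, Fin.sum_univ_three]
      nlinarith [mul_self_nonneg (w r 0), mul_self_nonneg (w r 1), mul_self_nonneg (w r 2)]
    linarith
  have hb : Real.sqrt (1 + w r ⬝ᵥ w r) * Real.sqrt (1 + w r ⬝ᵥ w r) = 1 + w r ⬝ᵥ w r :=
    Real.mul_self_sqrt hpos.le
  have hb0 : Real.sqrt (1 + w r ⬝ᵥ w r) ≠ 0 :=
    ne_of_gt (Real.sqrt_pos.mpr hpos)
  -- derivative of θ ⬝ᵥ w s
  have h1 : HasDerivAt (fun s => θ ⬝ᵥ w s) (θ ⬝ᵥ v) r := by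
    have : HasDerivAt (fun s => ∑ i, θ i * w s i) (∑ i, θ i * v i) r :=
      HasDerivAt.fun_sum fun i _ => (hwi i).const_mul (θ i)
    simpa [dotProduct] using this
  -- derivative of w s ⬝ᵥ w s
  have h2 : HasDerivAt (fun s => w s ⬝ᵥ w s) (2 * (w r ⬝ᵥ v)) r := by
    have : HasDerivAt (fun s => ∑ i, w s i * w s i)
        (∑ i, (v i * w r i + w r i * v i)) r :=
      HasDerivAt.fun_sum fun i _ => (hwi i).mul (hwi i)
    have e : (∑ i, (v i * w r i + w r i * v i)) = 2 * (w r ⬝ᵥ v) := by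
      simp [dotProduct, Fin.sum_univ_three]; ring
    rw [e] at this
    simpa [dotProduct] using this
  have h3 : HasDerivAt (fun s => Real.sqrt (1 + w s ⬝ᵥ w s))
      ((2 * (w r ⬝ᵥ v)) / (2 * Real.sqrt (1 + w r ⬝ᵥ w r))) r := by
    have h := ((hasDerivAt_const r (1:ℝ)).add h2).sqrt
      (by linarith : 1 + w r ⬝ᵥ w r ≠ 0)
    simpa using h
  have h4 := (hasDerivAt_id r).mul (h3.add h1)
  have heq : 1 * (Real.sqrt (1 + w r ⬝ᵥ w r) + θ ⬝ᵥ w r)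
      + r * ((2 * (w r ⬝ᵥ v)) / (2 * Real.sqrt (1 + w r ⬝ᵥ w r)) + θ ⬝ᵥ v)
      = (Real.sqrt (1 + w r ⬝ᵥ w r) + θ ⬝ᵥ w r) * (1 + r * (θ ⬝ᵥ t₁))
        + w r ⬝ᵥ (r • (t₁ - (θ ⬝ᵥ t₁) • θ) + r • crossProduct θ s₁) := by
    simp only [hv, dotProduct, cross_apply, Fin.sum_univ_three, Pi.add_apply,
      Pi.sub_apply, Pi.smul_apply, smul_eq_mul, Matrix.cons_val_zero,
      Matrix.cons_val_one, Matrix.head_cons, Matrix.cons_val_two, Matrix.tail_cons] at hb0 ⊢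
    field_simp
    ring
  rw [← heq]
  exact h4
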